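/- For every edge vw of an α-critical graph G, there exist maximum independent sets S and S′ of G such that v ∈ S, w ∉ S, w ∈ S′, and v ∉ S′. -/

import Mathlib

open Finset
open scoped Classical

/-- The Fibonacci index: the number of independent (stable) sets of `G`,
including the empty set. -/
noncomputable def fibIndex {V : Type*} [Fintype V] (G : SimpleGraph V) : ℕ :=
  (Finset.univ.filter fun s : Finset V => ∀ a ∈ s, ∀ b ∈ s, ¬ G.Adj a b).card

/-- The independence (stability) number of `G`. -/
noncomputable def indepNum {V : Type*} [Fintype V] (G : SimpleGraph V) : ℕ :=
  (Finset.univ.filter fun s : Finset V => ∀ a ∈ s, ∀ b ∈ s, ¬ G.Adj a b).sup Finset.card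

/-- A graph is `α`-critical if deleting any edge strictly increases the
independence number (a graph with no edges is `α`-critical by convention). -/
noncomputable def AlphaCritical {V : Type*} [Fintype V] (G : SimpleGraph V) : Prop :=
  ∀ e ∈ G.edgeSet, indepNum G < indepNum (G.deleteEdges {e})

lemma card_le_indepNum {V : Type*} [Fintype V] {G : SimpleGraph V} {S : Finset V}
    (h : ∀ a ∈ S, ∀ b ∈ S, ¬ G.Adj a b) : S.card ≤ indepNum G :=
  Finset.le_sup (Finset.mem_filter.mpr ⟨Finset.mem_univ _, h⟩)

lemma exists_indep_eq_indepNum {V : Type*} [Fintype V] (G : SimpleGraph V) :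
    ∃ T : Finset V, (∀ a ∈ T, ∀ b ∈ T, ¬ G.Adj a b) ∧ T.card = indepNum G := by
  obtain ⟨T, hTmem, hTsup⟩ := Finset.exists_mem_eq_sup
    (Finset.univ.filter fun s : Finset V => ∀ a ∈ s, ∀ b ∈ s, ¬ G.Adj a b)
    ⟨∅, by simp⟩ Finset.card
  exact ⟨T, (Finset.mem_filter.mp hTmem).2, hTsup.symm⟩

theorem stmt_14 {V : Type*} [Fintype V] {G : SimpleGraph V}
    (hcrit : AlphaCritical G) (v w : V) (hvw : G.Adj v w) :
    ∃ S S' : Finset V,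
      (∀ a ∈ S, ∀ b ∈ S, ¬ G.Adj a b) ∧ S.card = indepNum G ∧ v ∈ S ∧ w ∉ S ∧
      (∀ a ∈ S', ∀ b ∈ S', ¬ G.Adj a b) ∧ S'.card = indepNum G ∧ w ∈ S' ∧ v ∉ S' := by
  set G' := G.deleteEdges {s(v,w)} with hG'
  have hlt : indepNum G < indepNum G' := hcrit s(v,w) (by simpa using hvw)
  obtain ⟨T, hTind, hTcard⟩ := exists_indep_eq_indepNum G'
  -- key: any G-edge inside T must be {v,w}
  have key : ∀ a ∈ T, ∀ b ∈ T, G.Adj a b → (a = v ∧ b = w) ∨ (a = w ∧ b = v) := by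
    intro a ha b hb hab
    have := hTind a ha b hb
    rw [hG', SimpleGraph.deleteEdges_adj] at this
    push_neg at this
    have := this hab
    simpa [Sym2.eq_iff] using this
  have hvT : v ∈ T := by
    by_contra hv
    have : ∀ a ∈ T, ∀ b ∈ T, ¬ G.Adj a b := by
      intro a ha b hb hab
      rcases key a ha b hb hab with ⟨h1, _⟩ | ⟨_, h2⟩
      · exact hv (h1 ▸ ha)
      · exact hv (h2 ▸ hb)
    exact absurd (hTcard ▸ card_le_indepNum this) (by omega)
  have hwT : w ∈ T := by
    by_contra hw
    have : ∀ a ∈ T, ∀ b ∈ T, ¬ G.Adj a b := by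
      intro a ha b hb hab
      rcases key a ha b hb hab with ⟨_, h2⟩ | ⟨h1, _⟩
      · exact hw (h2 ▸ hb)
      · exact hw (h1 ▸ ha)
    exact absurd (hTcard ▸ card_le_indepNum this) (by omega)
  have hne : v ≠ w := hvw.ne
  have cardT : indepNum G + 1 ≤ T.card := by omega
  have indS : ∀ a ∈ T.erase w, ∀ b ∈ T.erase w, ¬ G.Adj a b := by
    intro a ha b hb hab
    rcases key a (Finset.mem_of_mem_erase ha) b (Finset.mem_of_mem_erase hb) hab with
      ⟨_, h2⟩ | ⟨h1, _⟩
    · exact (Finset.ne_of_mem_erase hb) h2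
    · exact (Finset.ne_of_mem_erase ha) h1
  have indS' : ∀ a ∈ T.erase v, ∀ b ∈ T.erase v, ¬ G.Adj a b := by
    intro a ha b hb hab
    rcases key a (Finset.mem_of_mem_erase ha) b (Finset.mem_of_mem_erase hb) hab with
      ⟨h1, _⟩ | ⟨_, h2⟩
    · exact (Finset.ne_of_mem_erase ha) h1
    · exact (Finset.ne_of_mem_erase hb) h2
  have cS : (T.erase w).card = indepNum G := by
    have h1 := Finset.card_erase_of_mem hwT
    have h2 := card_le_indepNum indS
    omega
  have cS' : (T.erase v).card = indepNum G := by
    have h1 := Finset.card_erase_of_mem hvT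
    have h2 := card_le_indepNum indS'
    omega
  exact ⟨T.erase w, T.erase v, indS, cS, Finset.mem_erase.mpr ⟨hne, hvT⟩,
    Finset.notMem_erase w T, indS', cS', Finset.mem_erase.mpr ⟨hne.symm, hwT⟩,
    Finset.notMem_erase v T⟩
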